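/- Let n, m be positive integers with n ≤ m, let S : Fin n → ℕ be strictly increasing with S(i) < m for all i, and let ℓ = ⌈log₂(m/n)⌉. Define p(i) = ⌊S(i)/2^ℓ⌋ + i. Then p is strictly increasing and p(i) < 2n for all i. (Hence the Elias-Fano high-bits bitmap, which has a 1 at each position p(i), is well defined and fits in at most 2n bits.) -/

import Mathlib

/-- Elias-Fano high-bits bitmap: the map `i ↦ ⌊S i / 2^ℓ⌋ + i` is strictly
increasing and bounded by `2n`. -/
theorem eliasFano_bitmap_positions (n m : ℕ) (hn : 0 < n) (hnm : n ≤ m)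
    (S : Fin n → ℕ) (hS : StrictMono S) (hSm : ∀ i, S i < m)
    (ℓ : ℕ) (hℓ : (ℓ : ℤ) = ⌈Real.logb 2 ((m : ℝ) / n)⌉) :
    StrictMono (fun i : Fin n => S i / 2 ^ ℓ + (i : ℕ)) ∧
      ∀ i : Fin n, S i / 2 ^ ℓ + (i : ℕ) < 2 * n := by
  have hm0 : 0 < m := lt_of_lt_of_le hn hnm
  -- key bound: m ≤ n * 2 ^ ℓ
  have hx : (0 : ℝ) < (m : ℝ) / n := by positivity
  have hlog : Real.logb 2 ((m : ℝ) / n) ≤ (ℓ : ℝ) := by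
    have := Int.le_ceil (Real.logb 2 ((m : ℝ) / n))
    rw [← hℓ] at this
    exact_mod_cast this
  have hkey : (m : ℝ) ≤ (n : ℝ) * 2 ^ ℓ := by
    have h1 : (m : ℝ) / n = (2 : ℝ) ^ (Real.logb 2 ((m : ℝ) / n)) := by
      rw [Real.rpow_logb (by norm_num) (by norm_num) hx]
    have h2 : (2 : ℝ) ^ (Real.logb 2 ((m : ℝ) / n)) ≤ (2 : ℝ) ^ (ℓ : ℝ) :=
      Real.rpow_le_rpow_of_exponent_le (by norm_num) hlog
    have h3 : (m : ℝ) / n ≤ (2 : ℝ) ^ ℓ := by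
      rw [h1]
      simpa [Real.rpow_natCast] using h2
    have hn' : (0 : ℝ) < n := by exact_mod_cast hn
    calc (m : ℝ) = (m : ℝ) / n * n := by field_simp
    _ ≤ (2 : ℝ) ^ ℓ * n := by exact mul_le_mul_of_nonneg_right h3 hn'.le
    _ = (n : ℝ) * 2 ^ ℓ := by ring
  have hkeyN : m ≤ n * 2 ^ ℓ := by exact_mod_cast hkey
  have hdiv : ∀ i : Fin n, S i / 2 ^ ℓ < n := by
    intro i
    rw [Nat.div_lt_iff_lt_mul (Nat.pow_pos (a := 2) (n := ℓ) (by norm_num))]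
    exact lt_of_lt_of_le (hSm i) hkeyN
  constructor
  · intro i j hij
    exact add_lt_add_of_le_of_lt (Nat.div_le_div_right (hS hij).le) hij
  · intro i
    have : (i : ℕ) < n := i.isLt
    have := hdiv i
    omega
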